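/- Let n, i, r, M be integers with n ≥ 2, 1 < i ≤ n, 0 ≤ r ≤ i, r ≡ i (mod 2) and M = (i−r)/2. Then the cardinality of J_r(i) equals C(n−r, M) − C(n−r, M−1), where C(·,·) denotes the binomial coefficient and C(n−r, M−1) is taken to be 0 when M = 0. -/

import Mathlib

open Finset

def Tset (N M : ℕ) : Finset (Fin M → ℕ) :=
  (Fintype.piFinset fun _ : Fin M => Finset.range N).filter
    (fun f => (∀ a b : Fin M, a < b → f a < f b) ∧ ∀ s : Fin M, 2 * (s : ℕ) + 1 ≤ f s)

lemma mem_Tset {N M : ℕ} {f : Fin M → ℕ} :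
    f ∈ Tset N M ↔ (∀ s, f s < N) ∧ (∀ a b : Fin M, a < b → f a < f b) ∧
      ∀ s : Fin M, 2 * (s : ℕ) + 1 ≤ f s := by
  simp [Tset, Fintype.mem_piFinset, and_assoc]

lemma Tset_card_zero (N : ℕ) : (Tset N 0).card = 1 := by
  rw [Finset.card_eq_one]
  refine ⟨fun s => s.elim0, ?_⟩
  ext f
  simp only [Finset.mem_singleton, mem_Tset]
  constructor
  · intro _; funext s; exact s.elim0
  · rintro rfl
    exact ⟨fun s => s.elim0, fun a => a.elim0, fun s => s.elim0⟩

lemma Tset_empty (N M : ℕ) (h : N < 2 * M) : Tset N M = ∅ := by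
  cases M with
  | zero => omega
  | succ m =>
    rw [Finset.eq_empty_iff_forall_notMem]
    intro f hf
    rw [mem_Tset] at hf
    have h1 := hf.1 (Fin.last m)
    have h2 := hf.2.2 (Fin.last m)
    simp [Fin.last] at h1 h2
    omega

lemma Tset_rec (N m : ℕ) (h : 2 * m + 2 ≤ N + 1) :
    (Tset (N+1) (m+1)).card = (Tset N (m+1)).card + (Tset N m).card := by
  rw [← Finset.card_filter_add_card_filter_not
    (p := fun f => f (Fin.last m) < N) (s := Tset (N+1) (m+1))]
  congr 1
  · -- part with last value < N equals Tset N (m+1)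
    refine Finset.card_nbij' id id ?_ ?_ (fun _ _ => rfl) (fun _ _ => rfl)
    · intro f hf
      rw [Finset.mem_coe, Finset.mem_filter, mem_Tset] at hf
      rw [Finset.mem_coe, mem_Tset]
      obtain ⟨⟨hb, hm, hl⟩, hlast⟩ := hf
      refine ⟨fun s => ?_, hm, hl⟩
      rcases eq_or_lt_of_le (Fin.le_last s) with hs | hs
      · rw [hs]; exact hlast
      · exact lt_trans (hm s (Fin.last m) hs) hlast
    · intro f hf
      rw [Finset.mem_coe, mem_Tset] at hf
      rw [Finset.mem_coe, Finset.mem_filter, mem_Tset]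
      exact ⟨⟨fun s => lt_trans (hf.1 s) (Nat.lt_succ_self N), hf.2.1, hf.2.2⟩,
        hf.1 (Fin.last m)⟩
  · -- part with last value = N equals Tset N m
    refine Finset.card_nbij' (fun f => Fin.init f) (fun g => Fin.snoc g N) ?_ ?_ ?_ ?_
    · intro f hf
      rw [Finset.mem_coe, Finset.mem_filter, mem_Tset] at hf
      obtain ⟨⟨hb, hm, hl⟩, hlast⟩ := hf
      have hfl : f (Fin.last m) = N := by
        have := hb (Fin.last m); omega
      rw [Finset.mem_coe, mem_Tset]
      refine ⟨fun s => ?_, fun a b hab => ?_, fun s => ?_⟩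
      · have := hm s.castSucc (Fin.last m) (Fin.castSucc_lt_last s)
        rw [hfl] at this
        exact this
      · exact hm a.castSucc b.castSucc (by simpa using hab)
      · simpa [Fin.init] using hl s.castSucc
    · intro g hg
      rw [Finset.mem_coe, mem_Tset] at hg
      obtain ⟨hb, hm, hl⟩ := hg
      rw [Finset.mem_coe, Finset.mem_filter, mem_Tset]
      refine ⟨⟨fun s => ?_, fun a b hab => ?_, fun s => ?_⟩, ?_⟩
      · rcases Fin.eq_castSucc_or_eq_last s with ⟨j, rfl⟩ | rfl
        · simp [Fin.snoc_castSucc]; exact (hb j).le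
        · simp [Fin.snoc_last]
      · rcases Fin.eq_castSucc_or_eq_last b with ⟨j, rfl⟩ | rfl
        · have ha : a < Fin.last m := lt_trans hab (Fin.castSucc_lt_last j)
          rcases Fin.eq_castSucc_or_eq_last a with ⟨k, rfl⟩ | rfl
          · simp only [Fin.snoc_castSucc]
            exact hm k j (by simpa using hab)
          · exact absurd ha (lt_irrefl _)
        · rcases Fin.eq_castSucc_or_eq_last a with ⟨k, rfl⟩ | rfl
          · simp only [Fin.snoc_castSucc, Fin.snoc_last]
            exact hb k
          · exact absurd hab (lt_irrefl _)
      · rcases Fin.eq_castSucc_or_eq_last s with ⟨j, rfl⟩ | rfl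
        · simpa [Fin.snoc_castSucc] using hl j
        · simp only []; rw [Fin.snoc_last]; simp only [Fin.val_last]; omega
      · simp [Fin.snoc_last]
    · intro f hf
      rw [Finset.mem_coe, Finset.mem_filter, mem_Tset] at hf
      have hfl : f (Fin.last m) = N := by
        have := hf.1.1 (Fin.last m); have := hf.2; omega
      rw [← hfl]
      exact Fin.snoc_init_self f
    · intro g _
      simp

lemma Tset_card (N : ℕ) : ∀ m : ℕ, 2 * m + 1 ≤ N →
    (Tset N (m+1)).card + N.choose m = N.choose (m+1) := by
  induction N with
  | zero => intro m h; omega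
  | succ N ih =>
    intro m h
    by_cases hb : 2 * m + 2 ≤ N + 1
    · rw [Tset_rec N m hb]
      cases m with
      | zero =>
        have h1 := Tset_card_zero N
        have h2 := ih 0 (by omega)
        have hp : (N+1).choose (0+1) = N.choose 0 + N.choose (0+1) :=
          Nat.choose_succ_succ N 0
        have e1 : (N+1).choose 0 = 1 := Nat.choose_zero_right _
        have e2 : N.choose 0 = 1 := Nat.choose_zero_right _
        omega
      | succ m' =>
        have h1 := ih (m'+1) (by omega)
        have h2 := ih m' (by omega)
        have hp1 : (N+1).choose (m'+1+1) = N.choose (m'+1) + N.choose (m'+1+1) :=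
          Nat.choose_succ_succ N (m'+1)
        have hp2 : (N+1).choose (m'+1) = N.choose m' + N.choose (m'+1) :=
          Nat.choose_succ_succ N m'
        omega
    · have hN : N + 1 = 2 * m + 1 := by omega
      rw [Tset_empty (N+1) (m+1) (by omega), hN]
      have : (2*m+1).choose m = (2*m+1).choose (m+1) := by
        have := Nat.choose_symm (n := 2*m+1) (k := m+1) (by omega)
        simpa [show 2*m+1 - (m+1) = m by omega] using this
      simp [this]

/-- For `n ≥ 2`, `1 < i ≤ n`, `0 ≤ r ≤ i` with `r ≡ i (mod 2)` and
`M = (i-r)/2`, the set `J_r(i)` of strictly increasing integer sequences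
`r < j_1 < ⋯ < j_M ≤ n` with `j_s ≤ n - i + r + 2s - 1` has cardinality
`C(n-r, M) - C(n-r, M-1)` (where `C(n-r, M-1)` is taken to be `0` when `M = 0`). -/
theorem card_Jri_C (n i r M : ℕ) (hn : 2 ≤ n) (hi : 1 < i) (hin : i ≤ n)
    (hri : r ≤ i) (hpar : r % 2 = i % 2) (hM : M = (i - r) / 2) :
    (Nat.card {j : Fin M → ℤ // StrictMono j ∧
        (∀ s : Fin M, (r : ℤ) < j s ∧ j s ≤ (n : ℤ)) ∧
        (∀ s : Fin M, j s ≤ (n : ℤ) - (i : ℤ) + (r : ℤ) + 2 * ((s.1 : ℤ) + 1) - 1)} : ℤ) =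
      ((n - r).choose M : ℤ) - (if M = 0 then 0 else ((n - r).choose (M - 1) : ℤ)) := by
  have hir : i = r + 2 * M := by omega
  cases M with
  | zero =>
    have h1 : Nat.card {j : Fin 0 → ℤ // StrictMono j ∧
        (∀ s : Fin 0, (r : ℤ) < j s ∧ j s ≤ (n : ℤ)) ∧
        (∀ s : Fin 0, j s ≤ (n : ℤ) - (i : ℤ) + (r : ℤ) + 2 * ((s.1 : ℤ) + 1) - 1)} = 1 := by
      rw [Nat.card_eq_one_iff_unique]
      constructor
      · exact ⟨fun a b => Subtype.ext (funext fun s => s.elim0)⟩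
      · exact ⟨⟨fun s => s.elim0, fun a b h => a.elim0, fun s => s.elim0, fun s => s.elim0⟩⟩
    rw [h1]
    simp
  | succ m =>
    have hir' : i = r + 2 * (m + 1) := hir
    have hN2 : 2 * m + 1 ≤ n - r := by omega
    have key := Tset_card (n - r) m hN2
    have hcard : Nat.card {j : Fin (m+1) → ℤ // StrictMono j ∧
        (∀ s : Fin (m+1), (r : ℤ) < j s ∧ j s ≤ (n : ℤ)) ∧
        (∀ s : Fin (m+1), j s ≤ (n : ℤ) - (i : ℤ) + (r : ℤ) + 2 * ((s.1 : ℤ) + 1) - 1)}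
        = (Tset (n - r) (m+1)).card := by
      rw [← Nat.card_eq_finsetCard]
      apply Nat.card_congr
      refine ⟨fun j => ⟨fun s => ((n : ℤ) - j.1 s.rev).toNat, ?_⟩,
              fun f => ⟨fun s => (n : ℤ) - (f.1 s.rev : ℤ), ?_, ?_, ?_⟩, ?_, ?_⟩
      · obtain ⟨j, hmono, hbd, hup⟩ := j
        dsimp only
        rw [mem_Tset]
        refine ⟨fun s => ?_, fun a b hab => ?_, fun s => ?_⟩
        · have h1 := hbd s.rev
          omega
        · have h1 := hbd a.rev
          have h2 := hbd b.rev
          have h3 : j b.rev < j a.rev := hmono (Fin.rev_lt_rev.mpr hab)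
          omega
        · have h1 := hup s.rev
          have h2 := hbd s.rev
          have hs : (s : ℕ) ≤ m := Fin.is_le s
          have hrev : ((s.rev : Fin (m+1)) : ℕ) = m - (s : ℕ) := by
            rw [Fin.val_rev]; omega
          rw [hrev] at h1
          omega
      · -- StrictMono of backward map
        obtain ⟨f, hf⟩ := f
        dsimp only
        rw [mem_Tset] at hf
        intro a b hab
        have h1 := hf.2.1 b.rev a.rev (Fin.rev_lt_rev.mpr hab)
        simp only
        omega
      · obtain ⟨f, hf⟩ := f
        dsimp only
        rw [mem_Tset] at hf
        intro s
        have h1 := hf.1 s.rev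
        constructor <;> omega
      · obtain ⟨f, hf⟩ := f
        dsimp only
        rw [mem_Tset] at hf
        intro s
        have h1 := hf.2.2 s.rev
        have hs : (s : ℕ) ≤ m := Fin.is_le s
        have hrev : ((s.rev : Fin (m+1)) : ℕ) = m - (s : ℕ) := by
          rw [Fin.val_rev]; omega
        rw [hrev] at h1
        omega
      · intro j
        obtain ⟨j, hmono, hbd, hup⟩ := j
        apply Subtype.ext
        funext s
        dsimp only
        simp only [Fin.rev_rev]
        have := hbd s
        omega
      · intro f
        obtain ⟨f, hf⟩ := f
        rw [mem_Tset] at hf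
        apply Subtype.ext
        funext s
        dsimp only
        simp only [Fin.rev_rev]
        have := hf.1 s
        omega
    rw [hcard]
    rw [if_neg (Nat.succ_ne_zero m)]
    simp only [Nat.add_sub_cancel]
    clear hcard
    omega
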